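/- Let g be a V_0-selector, i ∈ [1,ℓ], and X ⊆ Θ_i. For every tuple (φ_v)_{v∈X} such that φ_v ∈ ω_i^g(v) for each v ∈ X and (φ_v)_{v∈X} ∈ 𝒞^0, there exists an extension f of g such that φ_v = f_i(v) for all nodes v ∈ X. -/

import Mathlib

universe u v

/-- A leaf of a graph: a node with at most one neighbour. -/
def IsTreeLeaf {𝒱 : Type v} (T : SimpleGraph 𝒱) (x : 𝒱) : Prop :=
  (T.neighborSet x).Subsingleton

/-- `(T, B)` is a tree decomposition of the graph with vertex set `V` and edge
relation `E`. -/
def IsTreeDecomp {V : Type u} {𝒱 : Type v} (E : V → V → Prop) (T : SimpleGraph 𝒱)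
    (B : 𝒱 → Finset V) : Prop :=
  T.IsTree ∧ (∀ s t : V, E s t → ∃ x : 𝒱, s ∈ B x ∧ t ∈ B x) ∧
    ∀ s : V, (T.induce {x : 𝒱 | s ∈ B x}).Connected

/-- A nice (rooted) tree decomposition: every leaf has a singleton bag, every vertex
is the bag of some leaf, and along every tree edge one bag is obtained from the other
by adding exactly one vertex. -/
def IsNiceTD {V : Type u} {𝒱 : Type v} [DecidableEq V] (E : V → V → Prop)
    (T : SimpleGraph 𝒱) (B : 𝒱 → Finset V) (root : 𝒱) : Prop :=
  IsTreeDecomp E T B ∧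
  (∀ x : 𝒱, IsTreeLeaf T x → ∃ s : V, B x = {s}) ∧
  (∀ s : V, ∃ x : 𝒱, IsTreeLeaf T x ∧ B x = {s}) ∧
  ∀ x y : 𝒱, T.Adj x y →
    (∃ s : V, s ∉ B x ∧ B y = insert s (B x)) ∨ (∃ s : V, s ∉ B y ∧ B x = insert s (B y))

/-- A depth-first traversal `vs 1, …, vs ℓ` of the rooted tree `T`: it starts and ends
at the root, consecutive nodes are adjacent, and every oriented edge of `T` occurs
exactly once among consecutive pairs. -/
structure IsDFT {𝒱 : Type v} (T : SimpleGraph 𝒱) (root : 𝒱) (ℓ : ℕ) (vs : ℕ → 𝒱) :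
    Prop where
  one_le : 1 ≤ ℓ
  first : vs 1 = root
  last : vs ℓ = root
  adj : ∀ j : ℕ, 1 ≤ j → j < ℓ → T.Adj (vs j) (vs (j + 1))
  once : ∀ a b : 𝒱, T.Adj a b → ∃! j : ℕ, 1 ≤ j ∧ j < ℓ ∧ vs j = a ∧ vs (j + 1) = b

/-- `x` is an ancestor of `y` (w.r.t. `root`): `x` lies on the path from the root
to `y`.  (In a tree the path between two nodes is unique.) -/
def Anc {𝒱 : Type v} (T : SimpleGraph 𝒱) (root x y : 𝒱) : Prop :=
  ∀ p : T.Walk root y, p.IsPath → x ∈ p.support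

/-- `Θ_i`: the set of ancestors of `vs i`. -/
def Theta {𝒱 : Type v} (T : SimpleGraph 𝒱) (root : 𝒱) (vs : ℕ → 𝒱) (i : ℕ) : Set 𝒱 :=
  {x | Anc T root x (vs i)}

/-- `Θ_{≤ i} = ⋃_{1 ≤ j ≤ i} Θ_j`. -/
def ThetaLe {𝒱 : Type v} (T : SimpleGraph 𝒱) (root : 𝒱) (vs : ℕ → 𝒱) (i : ℕ) : Set 𝒱 :=
  {x | ∃ j : ℕ, 1 ≤ j ∧ j ≤ i ∧ x ∈ Theta T root vs j}

/-- `Ψ_i = ⋃_{x ∈ Θ_i} B x`. -/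
def Psi {V : Type u} {𝒱 : Type v} (T : SimpleGraph 𝒱) (root : 𝒱) (vs : ℕ → 𝒱)
    (B : 𝒱 → Finset V) (i : ℕ) : Set V :=
  {s | ∃ x ∈ Theta T root vs i, s ∈ B x}

/-- `Ψ_{≤ i} = ⋃_{1 ≤ j ≤ i} Ψ_j`. -/
def PsiLe {V : Type u} {𝒱 : Type v} (T : SimpleGraph 𝒱) (root : 𝒱) (vs : ℕ → 𝒱)
    (B : 𝒱 → Finset V) (i : ℕ) : Set V :=
  {s | ∃ j : ℕ, 1 ≤ j ∧ j ≤ i ∧ s ∈ Psi T root vs B j}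

/-- `x = n_i(w)`: `x` is the lowest ancestor of `w` belonging to `Θ_{≤ i}`. -/
def LowestAnc {𝒱 : Type v} (T : SimpleGraph 𝒱) (root : 𝒱) (vs : ℕ → 𝒱) (i : ℕ)
    (w x : 𝒱) : Prop :=
  Anc T root x w ∧ x ∈ ThetaLe T root vs i ∧
    ∀ y : 𝒱, Anc T root y w → y ∈ ThetaLe T root vs i → Anc T root y x

/-- `r = r(s)`: the node of `𝒯^s = {x | s ∈ B x}` closest to the root. -/
def IsBagRoot {V : Type u} {𝒱 : Type v} (T : SimpleGraph 𝒱) (root : 𝒱)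
    (B : 𝒱 → Finset V) (s : V) (r : 𝒱) : Prop :=
  s ∈ B r ∧ ∀ x : 𝒱, s ∈ B x → Anc T root r x

/-- `Ψ_{> i-1}(x) = {s ∈ Ψ_{> i-1} | n_i(s) = x}`, where `n_i(s) = n_i(r(s))`. -/
def PsiGtAt {V : Type u} {𝒱 : Type v} (T : SimpleGraph 𝒱) (root : 𝒱) (vs : ℕ → 𝒱)
    (B : 𝒱 → Finset V) (i : ℕ) (x : 𝒱) : Set V :=
  {s | s ∉ PsiLe T root vs B (i - 1) ∧
    ∃ r : 𝒱, IsBagRoot T root B s r ∧ LowestAnc T root vs i r x}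

/-- Possible values of a selector view: `?`, `⊤`, `⊥`, or an exit pair `(t, m)`. -/
inductive View (V : Type u) : Type u where
  | unk : View V
  | top : View V
  | bot : View V
  | exit : V → ℕ → View V

/-- The trace of the (partial) selector `f` from `s`: `iter f s n` is the `n`-th
vertex of the trace, if the trace is still defined at step `n`. -/
def iter {V : Type u} (f : V → Option V) (s : V) : ℕ → Option V
  | 0 => some s
  | n + 1 => (iter f s n).bind f

/-- `t` occurs infinitely often on the trace of `f` from `s`. -/
def infOcc {V : Type u} (f : V → Option V) (s t : V) : Prop :=
  ∀ N : ℕ, ∃ n : ℕ, N ≤ n ∧ iter f s n = some t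

/-- A parity game together with a tree decomposition and a depth-first traversal:
edge relation `E`, number of colors `C`, coloring `c`, set `V0` of vertices of
player `P₀` (`V1 = V0ᶜ`), tree `T` with bags `B`, depth-first traversal
`vs 1, …, vs len` and distinguished initial vertex `sigma`. -/
structure Setting (V : Type u) (𝒱 : Type v) where
  E : V → V → Prop
  C : ℕ
  c : V → ℕ
  V0 : Set V
  T : SimpleGraph 𝒱
  vs : ℕ → 𝒱
  len : ℕ
  sigma : V
  B : 𝒱 → Finset V

namespace Setting

variable {V : Type u} {𝒱 : Type v} (S : Setting V 𝒱)

/-- The root of the tree is the first node of the depth-first traversal. -/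
def root : 𝒱 := S.vs 1

/-- Standing assumptions: colors lie in `{1, …, C}`, `(T, B)` is a nice tree
decomposition of `(V, E)` rooted at `v₁` with bag `{σ}`, and `vs` is a
depth-first traversal of `T` of length `len`. -/
def Standing [DecidableEq V] : Prop :=
  (∀ s : V, 1 ≤ S.c s ∧ S.c s ≤ S.C) ∧
  IsNiceTD S.E S.T S.B S.root ∧
  IsDFT S.T S.root S.len S.vs ∧
  S.B S.root = {S.sigma}

def theta (i : ℕ) : Set 𝒱 := Theta S.T S.root S.vs i

def psi (i : ℕ) : Set V := Psi S.T S.root S.vs S.B i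

def psiLe (i : ℕ) : Set V := PsiLe S.T S.root S.vs S.B i

def psiGtAt (i : ℕ) (x : 𝒱) : Set V := PsiGtAt S.T S.root S.vs S.B i x

/-- The index `i` is critical: `Ψ_{>i} ⊊ Ψ_{>i-1}`. -/
def Crit (i : ℕ) : Prop := (S.psiLe i)ᶜ ⊂ (S.psiLe (i - 1))ᶜ

/-- `f` is a `W`-selector: a partial map with domain contained in `W` that follows
edges of the game. -/
def Sel (W : Set V) (f : V → Option V) : Prop :=
  ∀ s t : V, f s = some t → s ∈ W ∧ S.E s t

/-- The (maximal) trace of the `V`-selector `f` from `s` is winning for player `P₀`: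
either it is finite and its last vertex belongs to `V1 = V0ᶜ`, or it is infinite and
the maximal color occurring infinitely often along it is even. -/
def TraceWin (f : V → Option V) (s : V) : Prop :=
  (∃ (n : ℕ) (t : V), iter f s n = some t ∧ f t = none ∧ t ∉ S.V0) ∨
  ((∀ n : ℕ, iter f s n ≠ none) ∧
    ∃ m : ℕ, Even m ∧ (∃ t : V, infOcc f s t ∧ S.c t = m) ∧
      ∀ t : V, infOcc f s t → S.c t ≤ m)

/-- The selector view `f_i(x, s)` of the `V`-selector `f`: `S.SelView f i x s w`
means `f_i(x, s) = w`. -/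
def SelView (f : V → Option V) (i : ℕ) (x : 𝒱) (s : V) : View V → Prop := fun w =>
  match w with
  | View.unk =>
      (f s = none ∧ s ∉ S.psiGtAt i x) ∨ (∃ t : V, f s = some t ∧ t ∉ S.psiGtAt i x)
  | View.top =>
      (f s ≠ none ∨ s ∈ S.psiGtAt i x) ∧
      (∀ (n : ℕ) (t : V), 1 ≤ n → iter f s n = some t → t ∈ S.psiGtAt i x) ∧
      S.TraceWin f s
  | View.bot =>
      (f s ≠ none ∨ s ∈ S.psiGtAt i x) ∧
      (∀ (n : ℕ) (t : V), 1 ≤ n → iter f s n = some t → t ∈ S.psiGtAt i x) ∧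
      ¬ S.TraceWin f s
  | View.exit t m =>
      ∃ j : ℕ, 2 ≤ j ∧ iter f s j = some t ∧ t ∉ S.psiGtAt i x ∧
        (∀ (n : ℕ) (u : V), 1 ≤ n → n < j → iter f s n = some u → u ∈ S.psiGtAt i x) ∧
        (∃ (n : ℕ) (u : V), n < j ∧ iter f s n = some u ∧ S.c u = m) ∧
        (∀ (n : ℕ) (u : V), n < j → iter f s n = some u → S.c u ≤ m)

/-- The selector views `f_i(x)` and `g_i(x)` coincide (as functions on the bag of `x`). -/
def ViewEq (f g : V → Option V) (i : ℕ) (x : 𝒱) : Prop :=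
  ∀ s ∈ S.B x, ∀ w : View V, S.SelView f i x s w ↔ S.SelView g i x s w

/-- `f` is a `V`-selector extending the `V₀`-selector `g` (i.e. `g` is the
restriction of `f` to `V0`). -/
def Ext (f g : V → Option V) : Prop :=
  S.Sel Set.univ f ∧ (∀ s ∈ S.V0, g s = f s) ∧ ∀ s ∉ S.V0, g s = none

/-- The selector view `f_i(x)` of a `V`-selector, as a relation on the bag of `x`. -/
def viewOn (f : V → Option V) (i : ℕ) (x : 𝒱) : V → View V → Prop :=
  fun s w => s ∈ S.B x ∧ S.SelView f i x s w

/-- `ω_i^g(x) = { f_i(x) | f is an extension of g }`. -/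
def omega (g : V → Option V) (i : ℕ) (x : 𝒱) : Set (V → View V → Prop) :=
  {R | ∃ f : V → Option V, S.Ext f g ∧ R = S.viewOn f i x}

/-- The accessibility set `α_i^g`: vertices of `Ψ_i` reachable from `σ` along the
trace of some extension of `g`. -/
def alpha (g : V → Option V) (i : ℕ) : Set V :=
  {s | s ∈ S.psi i ∧ ∃ f : V → Option V, S.Ext f g ∧ ∃ k : ℕ, iter f S.sigma k = some s}

/-- The set `B(g)_{x,y} ⊆ {⊥, ⊤}` (with `false` for `⊥` and `true` for `⊤`). -/
def Bsel (g : V → Option V) (x y : V) : Set Bool :=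
  {b | (b = false ∧ (¬ S.E x y ∨ (x ∈ S.V0 ∧ g x = none) ∨
          (∃ z : V, g x = some z ∧ z ≠ y) ∨ (S.E x y ∧ x ∉ S.V0))) ∨
       (b = true ∧ (g x = some y ∨ (S.E x y ∧ x ∉ S.V0)))}

end Setting


section OmegaAux

namespace AncAux

variable {𝒱 : Type v} [DecidableEq 𝒱] {T : SimpleGraph 𝒱} {root x y z a b c d : 𝒱}

omit [DecidableEq 𝒱] in
lemma anc_refl : Anc T root x x := fun p _ => p.end_mem_support

lemma anc_trans (hxy : Anc T root x y) (hyz : Anc T root y z) : Anc T root x z := by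
  intro p hp
  have hy := hyz p hp
  exact p.support_takeUntil_subset hy (hxy (p.takeUntil y hy) (hp.takeUntil hy))

lemma anc_antisymm (hc : T.Connected) (hxy : Anc T root x y) (hyx : Anc T root y x) :
    x = y := by
  by_contra hne
  obtain ⟨w⟩ := hc.preconnected root y
  have hp : (w.toPath : T.Walk root y).IsPath := w.toPath.2
  set p : T.Walk root y := (w.toPath : T.Walk root y) with hpdef
  have hx : x ∈ p.support := hxy p hp
  have hyq : y ∈ (p.takeUntil x hx).support := hyx _ (hp.takeUntil hx)
  have hnd := hp.support_nodup
  rw [← p.take_spec hx, SimpleGraph.Walk.support_append, List.nodup_append] at hnd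
  have hyd : y ∈ (p.dropUntil x hx).support := SimpleGraph.Walk.end_mem_support _
  rw [SimpleGraph.Walk.support_eq_cons] at hyd
  rcases List.mem_cons.mp hyd with h | h
  · exact hne h.symm
  · exact hnd.2.2 y hyq y h rfl

/-- In a tree, adjacent nodes are comparable in the ancestor order. -/
lemma adj_anc (hT : T.IsTree) (hadj : T.Adj a b) :
    Anc T root a b ∨ Anc T root b a := by
  obtain ⟨Q, hQ, hQu⟩ := hT.existsUnique_path root a
  by_cases hb : b ∈ Q.support
  · right; intro p hp; rw [hQu p hp]; exact hb
  · left
    have hP : (Q.concat hadj).IsPath := by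
      rw [← SimpleGraph.Walk.isPath_reverse_iff, SimpleGraph.Walk.reverse_concat]
      exact (hQ.reverse).cons (by simpa using hb)
    intro p hp
    obtain ⟨P', hP', hP'u⟩ := hT.existsUnique_path root b
    rw [hP'u p hp, ← hP'u _ hP]
    rw [SimpleGraph.Walk.support_concat]
    exact List.mem_append_left _ Q.end_mem_support

/-- If `c` is a child of `d`, every ancestor of `c` is `c` itself or an ancestor of `d`. -/
lemma anc_of_child (hT : T.IsTree) (hadj : T.Adj d c) (hdc : Anc T root d c)
    (hx : Anc T root x c) : x = c ∨ Anc T root x d := by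
  obtain ⟨Q, hQ, hQu⟩ := hT.existsUnique_path root d
  have hcQ : c ∉ Q.support := by
    intro hc
    have hcd : Anc T root c d := by intro p hp; rw [hQu p hp]; exact hc
    exact hadj.ne (anc_antisymm hT.isConnected hdc hcd)
  have hP : (Q.concat hadj).IsPath := by
    rw [← SimpleGraph.Walk.isPath_reverse_iff, SimpleGraph.Walk.reverse_concat]
    exact (hQ.reverse).cons (by simpa using hcQ)
  have hxP := hx _ hP
  rw [SimpleGraph.Walk.support_concat, List.mem_append] at hxP
  rcases hxP with h | h
  · right; intro p hp; rw [hQu p hp]; exact h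
  · left; simpa using h

/-- Along a depth-first traversal, every ancestor of `vs i` has already been visited. -/
lemma dft_visit (hT : T.IsTree) {len : ℕ} {vs : ℕ → 𝒱} (hD : IsDFT T root len vs) :
    ∀ i : ℕ, 1 ≤ i → i ≤ len → ∀ x : 𝒱, Anc T root x (vs i) →
      ∃ j : ℕ, 1 ≤ j ∧ j ≤ i ∧ vs j = x := by
  intro i
  induction i with
  | zero => intro h; omega
  | succ n ih =>
    intro h1 h2 x hx
    rcases Nat.eq_zero_or_pos n with rfl | hn
    · refine ⟨1, le_rfl, le_rfl, ?_⟩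
      rw [hD.first] at hx ⊢
      have := hx SimpleGraph.Walk.nil SimpleGraph.Walk.IsPath.nil
      have hxr : x = root := by simpa using this
      exact hxr.symm
    · have hadj := hD.adj n hn (by omega)
      rcases adj_anc (root := root) hT hadj with hup | hdown
      · rcases anc_of_child hT hadj hup hx with rfl | hxd
        · exact ⟨n + 1, h1, le_rfl, rfl⟩
        · obtain ⟨j, hj1, hj2, hj3⟩ := ih hn (by omega) x hxd
          exact ⟨j, hj1, by omega, hj3⟩
      · obtain ⟨j, hj1, hj2, hj3⟩ := ih hn (by omega) x (anc_trans hx hdown)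
        exact ⟨j, hj1, by omega, hj3⟩

end AncAux

open AncAux

variable {V : Type u} {𝒱 : Type v}

lemma iter_succ_eq (f : V → Option V) (s : V) (n : ℕ) :
    iter f s (n + 1) = (iter f s n).bind f := rfl

lemma iter_one (f : V → Option V) (s : V) : iter f s 1 = f s := by
  show (some s).bind f = f s; rfl

lemma iter_step_some {f : V → Option V} {s t : V} {n : ℕ} (h : iter f s n = some t) :
    iter f s (n + 1) = f t := by rw [iter_succ_eq, h]; rfl

lemma iter_none_mono {f : V → Option V} {s : V} {n m : ℕ} (h : iter f s n = none)
    (hnm : n ≤ m) : iter f s m = none := by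
  induction m, hnm using Nat.le_induction with
  | base => exact h
  | succ m _ ih => rw [iter_succ_eq, ih]; rfl

namespace Setting
section SettingAux

variable (S : Setting V 𝒱)

/-- Two selectors in different regions have the same region only if the regions coincide. -/
lemma region_eq' (hc : S.T.Connected) {i : ℕ} {x y : 𝒱} [DecidableEq 𝒱] {s : V}
    (hx : s ∈ S.psiGtAt i x) (hy : s ∈ S.psiGtAt i y) : x = y := by
  obtain ⟨-, r, hr, hla⟩ := hx
  obtain ⟨-, r', hr', hla'⟩ := hy
  have hrr : r = r' := anc_antisymm hc (hr.2 r' hr'.1) (hr'.2 r hr.1)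
  subst hrr
  exact anc_antisymm hc (hla'.2.2 x hla.1 hla.2.1) (hla.2.2 y hla'.1 hla'.2.1)

/-- A region `Ψ_{>i-1}(x)` is disjoint from the bag of any other node of `Θ_i`. -/
lemma region_bag' [DecidableEq 𝒱] (hT : S.T.IsTree) (hD : IsDFT S.T S.root S.len S.vs)
    {i : ℕ} (hi1 : 1 ≤ i) (hi2 : i ≤ S.len) {x y : 𝒱} {s : V}
    (hs : s ∈ S.psiGtAt i x) (hy : y ∈ S.theta i) (hsy : s ∈ S.B y) : x = y := by
  obtain ⟨hnot, r, hr, hla⟩ := hs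
  have hry : Anc S.T S.root r y := hr.2 y hsy
  have hrvi : Anc S.T S.root r (S.vs i) := anc_trans hry hy
  have hrTh : r ∈ ThetaLe S.T S.root S.vs i := ⟨i, hi1, le_rfl, hrvi⟩
  have hxr : x = r := anc_antisymm hT.isConnected hla.1 (hla.2.2 r anc_refl hrTh)
  subst hxr
  by_contra hne
  have hxvi : x ≠ S.vs i := by
    rintro rfl
    exact hne (anc_antisymm hT.isConnected hry hy)
  obtain ⟨j, hj1, hji, hvj⟩ := dft_visit hT hD i hi1 hi2 x (anc_trans hry hy)
  have hjlt : j < i := lt_of_le_of_ne hji (by rintro rfl; exact hxvi hvj.symm)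
  exact hnot ⟨j, hj1, by omega, x, by rw [← hvj]; exact fun p hp => anc_refl p hp, hr.1⟩

lemma traceWin_mono {f f' : V → Option V} {s : V}
    (hall : ∀ n, iter f s n = iter f' s n) (h : S.TraceWin f s) : S.TraceWin f' s := by
  rcases h with ⟨n, t, h1, h2, h3⟩ | ⟨h1, m, hm, ⟨t, ht, hct⟩, hmax⟩
  · left
    refine ⟨n, t, (hall n) ▸ h1, ?_, h3⟩
    have e1 : iter f s (n + 1) = none := by rw [iter_step_some h1]; exact h2
    have e2 : iter f' s (n + 1) = f' t := iter_step_some ((hall n) ▸ h1)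
    rw [← e2, ← hall]; exact e1
  · right
    refine ⟨fun n => (hall n) ▸ h1 n, m, hm, ⟨t, ?_, hct⟩, fun u hu => hmax u ?_⟩
    · intro N; obtain ⟨k, hk1, hk2⟩ := ht N; exact ⟨k, hk1, (hall k) ▸ hk2⟩
    · intro N; obtain ⟨k, hk1, hk2⟩ := hu N; exact ⟨k, hk1, (hall k).symm ▸ hk2⟩

/-- Simulation: if `f` and `f'` agree on the region and at `s`, the traces agree
as long as the `f'`-trace stays in the region. -/
lemma iter_agree {i : ℕ} {x : 𝒱} {f f' : V → Option V} {s : V}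
    (hag : ∀ u ∈ S.psiGtAt i x, f u = f' u) (h0 : f s = f' s) :
    ∀ n : ℕ, (∀ k u, 1 ≤ k → k < n → iter f' s k = some u → u ∈ S.psiGtAt i x) →
      iter f s n = iter f' s n := by
  intro n
  induction n with
  | zero => intro _; rfl
  | succ n ih =>
    intro h
    cases n with
    | zero => rw [iter_one, iter_one]; exact h0
    | succ m =>
      have hm : iter f s (m + 1) = iter f' s (m + 1) :=
        ih fun k u hk hkm hsome => h k u hk (Nat.lt_succ_of_lt hkm) hsome
      have key : (iter f' s (m + 1)).bind f = (iter f' s (m + 1)).bind f' := by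
        cases hit : iter f' s (m + 1) with
        | none => rfl
        | some u =>
          have := hag u (h (m + 1) u (by omega) (Nat.lt_succ_self _) hit)
          simp [this]
      calc iter f s (m + 1 + 1) = (iter f s (m + 1)).bind f := rfl
        _ = (iter f' s (m + 1)).bind f := by rw [hm]
        _ = (iter f' s (m + 1)).bind f' := key
        _ = iter f' s (m + 1 + 1) := rfl

/-- Transfer of selector views between selectors agreeing on the region and at `s`. -/
lemma selView_agree {i : ℕ} {x : 𝒱} {f f' : V → Option V} {s : V}
    (hag : ∀ u ∈ S.psiGtAt i x, f u = f' u) (h0 : f s = f' s) (w : View V)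
    (h : S.SelView f' i x s w) : S.SelView f i x s w := by
  cases w with
  | unk =>
    rcases h with ⟨h1, h2⟩ | ⟨t, h1, h2⟩
    · exact Or.inl ⟨h0 ▸ h1, h2⟩
    · exact Or.inr ⟨t, h0 ▸ h1, h2⟩
  | top =>
    obtain ⟨h1, h2, h3⟩ := h
    have hall : ∀ n, iter f s n = iter f' s n := fun n =>
      S.iter_agree hag h0 n fun k u hk _ hsome => h2 k u hk hsome
    exact ⟨h0 ▸ h1, fun n t hn ht => h2 n t hn ((hall n) ▸ ht),
      S.traceWin_mono (fun n => (hall n).symm) h3⟩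
  | bot =>
    obtain ⟨h1, h2, h3⟩ := h
    have hall : ∀ n, iter f s n = iter f' s n := fun n =>
      S.iter_agree hag h0 n fun k u hk _ hsome => h2 k u hk hsome
    exact ⟨h0 ▸ h1, fun n t hn ht => h2 n t hn ((hall n) ▸ ht),
      fun hw => h3 (S.traceWin_mono hall hw)⟩
  | exit t m =>
    obtain ⟨j, hj, hjt, hnt, hin, ⟨n0, u0, hn0, hu0, hc0⟩, hle⟩ := h
    have heq : ∀ n, n ≤ j → iter f s n = iter f' s n := fun n hn =>
      S.iter_agree hag h0 n fun k u hk hkn hsome =>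
        hin k u hk (lt_of_lt_of_le hkn hn) hsome
    refine ⟨j, hj, (heq j le_rfl).symm ▸ hjt, hnt,
      fun n u h1 h2 hsome => hin n u h1 h2 ((heq n h2.le) ▸ hsome),
      ⟨n0, u0, hn0, (heq n0 hn0.le).symm ▸ hu0, hc0⟩,
      fun n u h1 hsome => hle n u h1 ((heq n h1.le) ▸ hsome)⟩

/-- The view `?` excludes all other views. -/
lemma selView_unk_excl {f : V → Option V} {i : ℕ} {x : 𝒱} {s : V}
    (h : S.SelView f i x s View.unk) :
    ∀ w : View V, w ≠ View.unk → ¬ S.SelView f i x s w := by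
  intro w hw hww
  rcases h with ⟨hn, hns⟩ | ⟨t, hsome, htR⟩
  · cases w with
    | unk => exact hw rfl
    | top => rcases hww.1 with h | h; exacts [h hn, hns h]
    | bot => rcases hww.1 with h | h; exacts [h hn, hns h]
    | exit t m =>
      obtain ⟨j, hj, hjt, -⟩ := hww
      have : iter f s j = none :=
        iter_none_mono (by rw [iter_one]; exact hn) (by omega)
      rw [this] at hjt; cases hjt
  · cases w with
    | unk => exact hw rfl
    | top =>
      exact htR (hww.2.1 1 t le_rfl (by rw [iter_one]; exact hsome))
    | bot =>
      exact htR (hww.2.1 1 t le_rfl (by rw [iter_one]; exact hsome))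
    | exit t' m =>
      obtain ⟨j, hj, -, -, hin, -⟩ := hww
      exact htR (hin 1 t le_rfl (by omega) (by rw [iter_one]; exact hsome))

end SettingAux
end Setting

end OmegaAux

/-- Every compatible tuple of views chosen from the sets `ω_i^g(x)`
(for `x` in a subset `X` of `Θ_i`) is realized by a single extension `f` of `g`. -/
theorem omega_simultaneous_realization {V : Type u} {𝒱 : Type v}
    [Fintype V] [DecidableEq V] [Fintype 𝒱]
    (S : Setting V 𝒱) (hS : S.Standing)
    (g : V → Option V) (hg : S.Sel S.V0 g)
    (i : ℕ) (hi1 : 1 ≤ i) (hi2 : i ≤ S.len)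
    (X : Set 𝒱) (hX : X ⊆ S.theta i)
    (φ : 𝒱 → V → View V → Prop)
    (hmem : ∀ x ∈ X, φ x ∈ S.omega g i x)
    (hC0 : ∀ x ∈ X, ∀ y ∈ X, x ≠ y → ∀ s : V, s ∈ S.B x → s ∈ S.B y →
      (φ x s View.unk ∨ φ y s View.unk)) :
    ∃ f : V → Option V, S.Ext f g ∧ ∀ x ∈ X, φ x = S.viewOn f i x := by
  classical
  haveI : DecidableEq 𝒱 := Classical.decEq _
  obtain ⟨-, hnice, hD, -⟩ := hS
  have hT : S.T.IsTree := hnice.1.1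
  have hConn : S.T.Connected := hT.isConnected
  have hmem' : ∀ x, x ∈ X → ∃ f, S.Ext f g ∧ φ x = S.viewOn f i x := fun x hx => by
    obtain ⟨f, hf, hfe⟩ := hmem x hx; exact ⟨f, hf, hfe⟩
  choose F hFext hFeq using hmem'
  have hgnone : ∀ s, s ∉ S.V0 → g s = none := by
    intro s hs
    cases hgs : g s with
    | none => rfl
    | some t => exact absurd (hg s t hgs).1 hs
  -- a proof-irrelevant family of chosen extensions
  let F' : 𝒱 → V → Option V := fun x => if hx : x ∈ X then F x hx else fun _ => none
  have hF'ext : ∀ x ∈ X, S.Ext (F' x) g ∧ φ x = S.viewOn (F' x) i x := by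
    intro x hx
    simp only [F', dif_pos hx]
    exact ⟨hFext x hx, hFeq x hx⟩
  -- the glued selector
  let f : V → Option V := fun s =>
    if s ∈ S.V0 then g s
    else if h : ∃ x, x ∈ X ∧ s ∈ S.psiGtAt i x then F' h.choose s
    else if h2 : ∃ x, x ∈ X ∧ s ∈ S.B x ∧ ¬ S.SelView (F' x) i x s View.unk then
      F' h2.choose s
    else none
  have hfV0 : ∀ s ∈ S.V0, f s = g s := fun s hs => by simp only [f, if_pos hs]
  -- on the region of `x`, `f` agrees with `F' x`
  have hreg : ∀ x (_ : x ∈ X), ∀ s ∈ S.psiGtAt i x, f s = F' x s := by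
    intro x hx s hs
    by_cases hv : s ∈ S.V0
    · rw [hfV0 s hv, (hF'ext x hx).1.2.1 s hv]
    · have hex : ∃ y, y ∈ X ∧ s ∈ S.psiGtAt i y := ⟨x, hx, hs⟩
      have heq : f s = F' hex.choose s := by simp only [f, if_neg hv, dif_pos hex]
      rw [heq, S.region_eq' hConn hex.choose_spec.2 hs]
  -- demand satisfaction outside the regions
  have hdem : ∀ x (_ : x ∈ X), ∀ s, s ∉ S.V0 → (¬ ∃ y, y ∈ X ∧ s ∈ S.psiGtAt i y) →
      s ∈ S.B x → ¬ S.SelView (F' x) i x s View.unk → f s = F' x s := by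
    intro x hx s hv hnr hsB hunk
    have hex : ∃ y, y ∈ X ∧ s ∈ S.B y ∧ ¬ S.SelView (F' y) i y s View.unk :=
      ⟨x, hx, hsB, hunk⟩
    have heq : f s = F' hex.choose s := by
      simp only [f, if_neg hv, dif_neg hnr, dif_pos hex]
    obtain ⟨hcX, hcB, hcunk⟩ := hex.choose_spec
    have hxy : hex.choose = x := by
      by_contra hne
      rcases hC0 _ hcX _ hx hne s hcB hsB with hu | hu
      · rw [(hF'ext _ hcX).2] at hu; exact hcunk hu.2
      · rw [(hF'ext _ hx).2] at hu; exact hunk hu.2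
    rw [heq, hxy]
  -- the key equivalence of views
  have main : ∀ x (hx : x ∈ X), ∀ s0 ∈ S.B x, ∀ w,
      S.SelView f i x s0 w ↔ S.SelView (F' x) i x s0 w := by
    intro x hx s0 hs0 w
    have hag : ∀ u ∈ S.psiGtAt i x, f u = F' x u := hreg x hx
    have hag' : ∀ u ∈ S.psiGtAt i x, F' x u = f u := fun u hu => (hag u hu).symm
    by_cases h0 : f s0 = F' x s0
    · exact ⟨fun h => S.selView_agree hag' h0.symm w h, fun h => S.selView_agree hag h0 w h⟩
    · have hv0 : s0 ∉ S.V0 := fun hv =>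
        h0 (by rw [hfV0 s0 hv]; exact (hF'ext x hx).1.2.1 s0 hv)
      have hs0R : s0 ∉ S.psiGtAt i x := fun hr => h0 (hag s0 hr)
      have hnr : ¬ ∃ y, y ∈ X ∧ s0 ∈ S.psiGtAt i y := by
        rintro ⟨y, hy, hys⟩
        exact hs0R (S.region_bag' hT hD hi1 hi2 hys (hX hx) hs0 ▸ hys)
      have hxunk : S.SelView (F' x) i x s0 View.unk := by
        by_contra hu
        exact h0 (hdem x hx s0 hv0 hnr hs0 hu)
      have hfunk : S.SelView f i x s0 View.unk := by
        by_cases h2 : ∃ y, y ∈ X ∧ s0 ∈ S.B y ∧ ¬ S.SelView (F' y) i y s0 View.unk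
        · have heq : f s0 = F' h2.choose s0 := by
            simp only [f, if_neg hv0, dif_neg hnr, dif_pos h2]
          obtain ⟨hcX, hcB, hcunk⟩ := h2.choose_spec
          have hyx : h2.choose ≠ x := fun e => hcunk (by rw [e]; exact hxunk)
          have hs0Ry : s0 ∉ S.psiGtAt i h2.choose := fun hr => hnr ⟨h2.choose, hcX, hr⟩
          have hsome : ∃ t', F' h2.choose s0 = some t' ∧ t' ∈ S.psiGtAt i h2.choose := by
            cases ht : F' h2.choose s0 with
            | none => exact absurd (Or.inl ⟨ht, hs0Ry⟩) hcunk
            | some t' =>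
              by_cases htR : t' ∈ S.psiGtAt i h2.choose
              · exact ⟨t', rfl, htR⟩
              · exact absurd (Or.inr ⟨t', ht, htR⟩) hcunk
          obtain ⟨t', ht', htR⟩ := hsome
          refine Or.inr ⟨t', by rw [heq]; exact ht', fun htx => ?_⟩
          exact hyx (S.region_eq' hConn htR htx)
        · have heq : f s0 = none := by
            simp only [f, if_neg hv0, dif_neg hnr, dif_neg h2]
          exact Or.inl ⟨heq, hs0R⟩
      by_cases hwu : w = View.unk
      · subst hwu; exact iff_of_true hfunk hxunk
      · exact iff_of_false (fun h => S.selView_unk_excl hfunk w hwu h)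
          (fun h => S.selView_unk_excl hxunk w hwu h)
  refine ⟨f, ⟨?_, fun s hs => (hfV0 s hs).symm, hgnone⟩, ?_⟩
  · -- `f` is a selector
    intro s t hft
    refine ⟨trivial, ?_⟩
    by_cases hv : s ∈ S.V0
    · rw [hfV0 s hv] at hft; exact (hg s t hft).2
    · by_cases h : ∃ x, x ∈ X ∧ s ∈ S.psiGtAt i x
      · have heq : f s = F' h.choose s := by simp only [f, if_neg hv, dif_pos h]
        rw [heq] at hft
        exact ((hF'ext _ h.choose_spec.1).1.1 s t hft).2
      · by_cases h2 : ∃ x, x ∈ X ∧ s ∈ S.B x ∧ ¬ S.SelView (F' x) i x s View.unk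
        · have heq : f s = F' h2.choose s := by
            simp only [f, if_neg hv, dif_neg h, dif_pos h2]
          rw [heq] at hft
          exact ((hF'ext _ h2.choose_spec.1).1.1 s t hft).2
        · have heq : f s = none := by simp only [f, if_neg hv, dif_neg h, dif_neg h2]
          rw [heq] at hft; cases hft
  · -- the views are realized
    intro x hx
    rw [(hF'ext x hx).2]
    funext s w
    refine propext ⟨fun h => ⟨h.1, (main x hx s h.1 w).2 h.2⟩,
      fun h => ⟨h.1, (main x hx s h.1 w).1 h.2⟩⟩
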